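/- Let q be a prime, χ a nontrivial Dirichlet character modulo q, and c a positive integer with q² ∣ c. Then for all integers r, n with gcd(r, q) = 1, the twisted Kloosterman sum vanishes: S_χ(r, nq, c) = 0. -/

import Mathlib

/-- `e(x) = exp(2πix)`. -/
noncomputable def e (x : ℂ) : ℂ := Complex.exp (2 * Real.pi * Complex.I * x)

/-- The twisted Kloosterman sum `S_χ(m, n, c) = Σ_{d ∈ (ℤ/cℤ)ˣ} χ(d) e((m d + n d⁻¹)/c)`,
where `χ(d)` is evaluated at the reduction of `d` modulo `q`. -/
noncomputable def SklChi {q : ℕ} (χ : DirichletCharacter ℂ q) (m n : ℤ) (c : ℕ) : ℂ :=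
  ∑ᶠ d : (ZMod c)ˣ,
    χ (((d : ZMod c).val : ZMod q)) *
      e ((m * ((d : ZMod c).val : ℂ) + n * (((d⁻¹ : (ZMod c)ˣ) : ZMod c).val : ℂ)) / (c : ℂ))

lemma e_add (x y : ℂ) : e (x + y) = e x * e y := by
  simp [e, mul_add, Complex.exp_add]

lemma e_int (k : ℤ) : e (k : ℂ) = 1 := by
  rw [e, mul_comm]
  exact_mod_cast Complex.exp_int_mul_two_pi_mul_I k

lemma e_congr {c : ℕ} (hc : c ≠ 0) {a b : ℤ} (h : (a : ZMod c) = (b : ZMod c)) :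
    e ((a : ℂ) / c) = e ((b : ℂ) / c) := by
  obtain ⟨k, hk⟩ := ((ZMod.intCast_eq_intCast_iff a b c).mp h).dvd
  have hb : b = a + c * k := by linarith [hk]
  have hcC : (c : ℂ) ≠ 0 := Nat.cast_ne_zero.mpr hc
  have : (b : ℂ) / c = (a : ℂ) / c + (k : ℤ) := by
    rw [hb]; push_cast; field_simp
  rw [this, e_add, e_int, mul_one]

lemma e_pow (y : ℂ) (t : ℕ) : e (y * t) = e y ^ t := by
  rw [e, e, ← Complex.exp_nat_mul]; ring_nf

lemma e_ne_one {q : ℕ} (hq : 0 < q) {a : ℤ} (h : ¬ ((q : ℤ) ∣ a)) : e ((a : ℂ) / q) ≠ 1 := by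
  intro hcon
  rw [e, Complex.exp_eq_one_iff] at hcon
  obtain ⟨k, hk⟩ := hcon
  have hqC : (q : ℂ) ≠ 0 := Nat.cast_ne_zero.mpr hq.ne'
  have hpi : (2 * (Real.pi : ℂ) * Complex.I) ≠ 0 := by
    simp [Real.pi_ne_zero, Complex.I_ne_zero]
  have h2 : (2 * (Real.pi : ℂ) * Complex.I) * ((a : ℂ) / q) =
      (2 * (Real.pi : ℂ) * Complex.I) * (k : ℂ) := by rw [hk]; ring
  have h3 : (a : ℂ) / q = (k : ℂ) := mul_left_cancel₀ hpi h2
  have ha : (a : ℂ) = ((k * q : ℤ) : ℂ) := by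
    push_cast
    field_simp at h3
    linear_combination h3
  have : a = k * q := by exact_mod_cast ha
  exact h ⟨k, by linarith⟩

theorem twisted_kloosterman_vanishes_of_sq_dvd
    (q : ℕ) (hq : q.Prime) (χ : DirichletCharacter ℂ q) (hχ : χ ≠ 1)
    (c : ℕ) (hc : 0 < c) (hq2c : q ^ 2 ∣ c)
    (r n : ℤ) (hr : Int.gcd r (q : ℤ) = 1) :
    SklChi χ r (n * q) c = 0 := by
  haveI : NeZero c := ⟨hc.ne'⟩
  have hqpos : 0 < q := hq.pos
  obtain ⟨b, hb⟩ : q ∣ c := dvd_trans (dvd_pow_self q two_ne_zero) hq2c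
  have hqc : q ∣ c := ⟨b, hb⟩
  have hbpos : 0 < b := by
    rcases Nat.eq_zero_or_pos b with h0 | h0
    · exfalso; rw [h0, mul_zero] at hb; exact hc.ne' hb
    · exact h0
  have hqb : q ∣ b := by
    obtain ⟨m, hm⟩ := hq2c
    have : q * b = q * (q * m) := by rw [← hb, hm]; ring
    exact ⟨m, Nat.eq_of_mul_eq_mul_left hqpos this⟩
  have hBsq : (b : ZMod c) * (b : ZMod c) = 0 := by
    obtain ⟨m, hm⟩ := hqb
    rw [← Nat.cast_mul, ZMod.natCast_eq_zero_iff]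
    exact ⟨m, by rw [hb, hm]; ring⟩
  have hqb0 : (q : ZMod c) * (b : ZMod c) = 0 := by
    rw [← Nat.cast_mul, ← hb, ZMod.natCast_self]
  have hkey : ∀ t : ℕ, ((1 : ZMod c) + b * t) * (1 - b * t) = 1 := by
    intro t
    have h : ((b : ZMod c) * t) * ((b : ZMod c) * t) = 0 := by
      rw [show ((b : ZMod c) * t) * ((b : ZMod c) * t) = (b * b) * (t * t) by ring,
        hBsq, zero_mul]
    linear_combination -h
  set ε : ℕ → (ZMod c)ˣ := fun t =>
    ⟨1 + b * t, 1 - b * t, hkey t, by rw [mul_comm]; exact hkey t⟩ with hε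
  set F : (ZMod c)ˣ → ℂ := fun d =>
    χ (((d : ZMod c).val : ZMod q)) *
      e (((r : ℂ) * ((d : ZMod c).val : ℂ) +
        ((n * q : ℤ) : ℂ) * (((d⁻¹ : (ZMod c)ˣ) : ZMod c).val : ℂ)) / (c : ℂ)) with hF
  have hS : SklChi χ r (n * q) c = ∑ d : (ZMod c)ˣ, F d := by
    rw [SklChi, finsum_eq_sum_of_fintype]
  -- the summand is not divisible by q
  have step3 : ∀ d : (ZMod c)ˣ, ¬ ((q : ℤ) ∣ r * (((d : ZMod c).val : ℕ) : ℤ)) := by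
    intro d hdvd
    have hprime : Prime (q : ℤ) := Int.prime_iff_natAbs_prime.mpr (by simpa using hq)
    rcases hprime.dvd_mul.mp hdvd with h1 | h1
    · have hco : IsCoprime r (q : ℤ) := Int.isCoprime_iff_gcd_eq_one.mpr hr
      exact hprime.not_unit (hco.isUnit_of_dvd' h1 dvd_rfl)
    · have h2 : q ∣ (d : ZMod c).val := Int.natCast_dvd_natCast.mp h1
      have h3 : q ∣ Nat.gcd (d : ZMod c).val c := Nat.dvd_gcd h2 hqc
      rw [ZMod.val_coe_unit_coprime d] at h3
      exact absurd (Nat.le_of_dvd one_pos h3) (Nat.not_le.mpr hq.one_lt)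
  -- geometric sum vanishes
  have geo : ∀ d : (ZMod c)ˣ,
      ∑ t ∈ Finset.range q, e (((r * (((d : ZMod c).val : ℕ) : ℤ) : ℤ) : ℂ) / q) ^ t = 0 := by
    intro d
    set y : ℂ := ((r * (((d : ZMod c).val : ℕ) : ℤ) : ℤ) : ℂ) / q with hy
    have hx1 : e y ≠ 1 := e_ne_one hqpos (step3 d)
    have hxq : e y ^ q = 1 := by
      rw [← e_pow]
      have hqC : (q : ℂ) ≠ 0 := Nat.cast_ne_zero.mpr hqpos.ne'
      have : y * (q : ℕ) = ((r * (((d : ZMod c).val : ℕ) : ℤ) : ℤ) : ℂ) := by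
        rw [hy]; field_simp
      rw [this, e_int]
    rw [geom_sum_eq hx1, hxq, sub_self, zero_div]
  -- key identity
  have step2 : ∀ (d : (ZMod c)ˣ) (t : ℕ),
      F (d * ε t) = F d * e (((r * (((d : ZMod c).val : ℕ) : ℤ) : ℤ) : ℂ) / q) ^ t := by
    intro d t
    set D : ZMod c := (d : ZMod c) with hD
    set Dinv : ZMod c := ((d⁻¹ : (ZMod c)ˣ) : ZMod c) with hDinv
    have hcoe : ((d * ε t : (ZMod c)ˣ) : ZMod c) = D * (1 + b * t) := rfl
    have hcoeinv : (((d * ε t)⁻¹ : (ZMod c)ˣ) : ZMod c) = Dinv * (1 - b * t) := by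
      rw [mul_inv_rev, mul_comm, Units.val_mul]
      rfl
    -- chi part
    have hchi : χ ((((d * ε t : (ZMod c)ˣ) : ZMod c).val : ZMod q)) =
        χ ((D.val : ZMod q)) := by
      rw [hcoe, ZMod.natCast_val, ZMod.natCast_val, ZMod.cast_mul hqc, ZMod.cast_add hqc,
        ZMod.cast_one hqc, ZMod.cast_mul hqc, ZMod.cast_natCast hqc, ZMod.cast_natCast hqc]
      have hb0 : ((b : ℕ) : ZMod q) = 0 := by
        rw [ZMod.natCast_eq_zero_iff]; exact hqb
      rw [hb0, zero_mul, add_zero, mul_one]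
    -- exponential part: integer congruence mod c
    have hcong : ((r * (((D * (1 + b * t)).val : ℕ) : ℤ) +
          (n * q) * (((Dinv * (1 - b * t)).val : ℕ) : ℤ) : ℤ) : ZMod c) =
        ((r * ((D.val : ℕ) : ℤ) + (n * q) * ((Dinv.val : ℕ) : ℤ) +
          r * ((D.val : ℕ) : ℤ) * b * t : ℤ) : ZMod c) := by
      push_cast [ZMod.natCast_val, ZMod.cast_id]
      linear_combination (-(n : ZMod c) * Dinv * (t : ZMod c)) * hqb0
    have hE := e_congr (c := c) hc.ne' hcong
    have hcC : (c : ℂ) ≠ 0 := Nat.cast_ne_zero.mpr hc.ne'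
    have hqC : (q : ℂ) ≠ 0 := Nat.cast_ne_zero.mpr hqpos.ne'
    have hbC : (b : ℂ) ≠ 0 := Nat.cast_ne_zero.mpr hbpos.ne'
    calc F (d * ε t)
        = χ ((D.val : ZMod q)) *
            e (((r * (((D * (1 + b * t)).val : ℕ) : ℤ) +
              (n * q) * (((Dinv * (1 - b * t)).val : ℕ) : ℤ) : ℤ) : ℂ) / c) := by
          simp only [hF]
          simp only [hcoe, hcoeinv, hchi]
          have harg0 : ((r : ℂ) * (((D * (1 + b * t)).val : ℕ) : ℂ) +
              ((n * q : ℤ) : ℂ) * (((Dinv * (1 - b * t)).val : ℕ) : ℂ)) / (c : ℂ) =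
              ((r * (((D * (1 + b * t)).val : ℕ) : ℤ) +
                (n * q) * (((Dinv * (1 - b * t)).val : ℕ) : ℤ) : ℤ) : ℂ) / c := by
            push_cast; ring
          rw [harg0]
          rw [hcoe] at hchi
          rw [hchi]
      _ = χ ((D.val : ZMod q)) *
            e (((r * ((D.val : ℕ) : ℤ) + (n * q) * ((Dinv.val : ℕ) : ℤ) +
              r * ((D.val : ℕ) : ℤ) * b * t : ℤ) : ℂ) / c) := by rw [hE]
      _ = χ ((D.val : ZMod q)) *
            (e (((r * ((D.val : ℕ) : ℤ) + (n * q) * ((Dinv.val : ℕ) : ℤ) : ℤ) : ℂ) / c) *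
             e (((r * ((D.val : ℕ) : ℤ) * b * t : ℤ) : ℂ) / c)) := by
          rw [← e_add]
          congr 2
          push_cast
          field_simp
      _ = F d * e (((r * ((D.val : ℕ) : ℤ) : ℤ) : ℂ) / q) ^ t := by
          simp only [hF]
          have harg : ((r * ((D.val : ℕ) : ℤ) * b * t : ℤ) : ℂ) / c =
              (((r * ((D.val : ℕ) : ℤ) : ℤ) : ℂ) / q) * (t : ℕ) := by
            have hcQ : (c : ℂ) = (q : ℂ) * (b : ℂ) := by
              rw [hb]; push_cast; ring
            rw [hcQ]
            push_cast
            field_simp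
          rw [harg, e_pow]
          have harg2 : ((r : ℂ) * (((d : ZMod c).val : ℕ) : ℂ) +
              ((n * q : ℤ) : ℂ) * ((((d⁻¹ : (ZMod c)ˣ) : ZMod c).val : ℕ) : ℂ)) / (c : ℂ) =
              ((r * ((D.val : ℕ) : ℤ) + (n * q) * ((Dinv.val : ℕ) : ℤ) : ℤ) : ℂ) / c := by
            push_cast; ring
          rw [harg2]; ring
  -- bijection d ↦ d * ε t
  have hbij : ∀ t : ℕ, (∑ d : (ZMod c)ˣ, F (d * ε t)) = ∑ d : (ZMod c)ˣ, F d := by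
    intro t
    exact Fintype.sum_bijective (Equiv.mulRight (ε t)) (Equiv.bijective _)
      (fun d => F (d * ε t)) F (fun d => rfl)
  have hq0 : (q : ℂ) ≠ 0 := Nat.cast_ne_zero.mpr hqpos.ne'
  have hmain : (q : ℂ) * ∑ d : (ZMod c)ˣ, F d = 0 := by
    have h1 : (q : ℂ) * ∑ d : (ZMod c)ˣ, F d =
        ∑ t ∈ Finset.range q, ∑ d : (ZMod c)ˣ, F (d * ε t) := by
      rw [Finset.sum_congr rfl (fun t _ => hbij t), Finset.sum_const, Finset.card_range,
        nsmul_eq_mul]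
    rw [h1, Finset.sum_comm]
    have h2 : ∀ d ∈ (Finset.univ : Finset (ZMod c)ˣ),
        ∑ t ∈ Finset.range q, F (d * ε t) = 0 := by
      intro d _
      calc ∑ t ∈ Finset.range q, F (d * ε t)
          = ∑ t ∈ Finset.range q,
              F d * e (((r * (((d : ZMod c).val : ℕ) : ℤ) : ℤ) : ℂ) / q) ^ t :=
            Finset.sum_congr rfl fun t _ => step2 d t
        _ = F d * ∑ t ∈ Finset.range q,
              e (((r * (((d : ZMod c).val : ℕ) : ℤ) : ℤ) : ℂ) / q) ^ t := by
            rw [Finset.mul_sum]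
        _ = 0 := by rw [geo d, mul_zero]
    rw [Finset.sum_congr rfl h2, Finset.sum_const_zero]
  rw [hS]
  exact (mul_eq_zero.mp hmain).resolve_left hq0
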